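/- Let J, H be Hilbert spaces, K ∈ B(J, H), and {gₙ} an atomic system for K. Then there exist α, β > 0 such that α‖K* f‖² ≤ ∑ₙ |⟨f, gₙ⟩|² ≤ β‖f‖² for all f ∈ H. -/

import Mathlib

open scoped ComplexInnerProductSpace

/-- Let `J, H` be Hilbert spaces, `K ∈ B(J, H)`, and `{gₙ}` an atomic system for `K`. Then
there exist `α, β > 0` such that `α‖K* f‖² ≤ ∑ₙ |⟨f, gₙ⟩|² ≤ β‖f‖²` for all `f ∈ H`. -/
theorem stmt_13 {J H : Type*}
    [NormedAddCommGroup J] [InnerProductSpace ℂ J] [CompleteSpace J]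
    [NormedAddCommGroup H] [InnerProductSpace ℂ H] [CompleteSpace H]
    (K : J →L[ℂ] H) (g : ℕ → H)
    (c : ℝ) (hc : 0 < c)
    (hBessel : ∀ x : H, (Summable fun n => ‖⟪x, g n⟫‖ ^ 2) ∧
      ∑' n, ‖⟪x, g n⟫‖ ^ 2 ≤ c * ‖x‖ ^ 2)
    (γ : ℝ) (hγ : 0 < γ)
    (hatom : ∀ x : J, ∃ a : ℕ → ℂ, Summable (fun n => ‖a n‖ ^ 2) ∧
      Real.sqrt (∑' n, ‖a n‖ ^ 2) ≤ γ * ‖x‖ ∧ HasSum (fun n => a n • g n) (K x)) :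
    ∃ α β : ℝ, 0 < α ∧ 0 < β ∧ ∀ x : H,
      α * ‖ContinuousLinearMap.adjoint K x‖ ^ 2 ≤ ∑' n, ‖⟪x, g n⟫‖ ^ 2 ∧
      ∑' n, ‖⟪x, g n⟫‖ ^ 2 ≤ β * ‖x‖ ^ 2 := by
  refine ⟨1 / γ ^ 2, c, by positivity, hc, fun x => ?_⟩
  obtain ⟨hBsum, hBle⟩ := hBessel x
  refine ⟨?_, hBle⟩
  set y := ContinuousLinearMap.adjoint K x with hy
  obtain ⟨a, ha2, haγ, haK⟩ := hatom y
  set S := ∑' n, ‖⟪x, g n⟫‖ ^ 2 with hS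
  have hSnonneg : 0 ≤ S := tsum_nonneg fun n => by positivity
  -- Hölder / Cauchy-Schwarz in ℓ²
  have h22 : (2 : ℝ).HolderConjugate 2 := by
    rw [Real.holderConjugate_iff]; norm_num
  have hrpow : ∀ t : ℝ, t ^ (2 : ℝ) = t ^ (2 : ℕ) := by
    intro t; rw [← Real.rpow_natCast]; norm_num
  have ha2' : Summable fun n => ‖a n‖ ^ (2 : ℝ) := by
    simpa only [hrpow] using ha2
  have hb2' : Summable fun n => ‖⟪x, g n⟫‖ ^ (2 : ℝ) := by
    simpa only [hrpow] using hBsum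
  have hCS := Real.summable_and_inner_le_Lp_mul_Lq_tsum_of_nonneg h22 (f := fun n => ‖a n‖)
    (g := fun n => ‖⟪x, g n⟫‖) (fun n => norm_nonneg _) (fun n => norm_nonneg _) ha2' hb2'
  obtain ⟨hmulsum, hmul_le⟩ := hCS
  have hsqrt : (∑' n, ‖a n‖ ^ (2:ℝ)) ^ ((1:ℝ)/2) * (∑' n, ‖⟪x, g n⟫‖ ^ (2:ℝ)) ^ ((1:ℝ)/2)
      = Real.sqrt (∑' n, ‖a n‖ ^ 2) * Real.sqrt S := by
    rw [← Real.sqrt_eq_rpow, ← Real.sqrt_eq_rpow]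
    congr 2 <;> · apply tsum_congr; intro n; rw [hrpow]
  -- inner product expansion
  have hinner : HasSum (fun n => ⟪x, a n • g n⟫) ⟪x, K y⟫ := haK.mapL (innerSL ℂ x)
  have hnorm : ‖⟪x, K y⟫‖ ≤ ∑' n, ‖a n‖ * ‖⟪x, g n⟫‖ := by
    rw [← hinner.tsum_eq]
    calc ‖∑' n, ⟪x, a n • g n⟫‖ ≤ ∑' n, ‖⟪x, a n • g n⟫‖ := by
          apply norm_tsum_le_tsum_norm
          simpa [inner_smul_right, norm_mul] using hmulsum
      _ = ∑' n, ‖a n‖ * ‖⟪x, g n⟫‖ := by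
          apply tsum_congr; intro n; simp [inner_smul_right, norm_mul]
  have hKy : ‖y‖ ^ 2 ≤ γ * ‖y‖ * Real.sqrt S := by
    have h1 : (‖y‖ : ℝ) ^ 2 = ‖(⟪y, y⟫ : ℂ)‖ := by
      rw [inner_self_eq_norm_sq_to_K]; simp [abs_of_nonneg]
    have h2 : (⟪y, y⟫ : ℂ) = ⟪x, K y⟫ := by
      rw [hy, ContinuousLinearMap.adjoint_inner_left]
    calc ‖y‖ ^ 2 = ‖(⟪x, K y⟫ : ℂ)‖ := by rw [h1, h2]
      _ ≤ ∑' n, ‖a n‖ * ‖⟪x, g n⟫‖ := hnorm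
      _ ≤ Real.sqrt (∑' n, ‖a n‖ ^ 2) * Real.sqrt S := hsqrt ▸ hmul_le
      _ ≤ γ * ‖y‖ * Real.sqrt S := by
          apply mul_le_mul_of_nonneg_right haγ (Real.sqrt_nonneg _)
  -- conclude
  have : ‖y‖ ≤ γ * Real.sqrt S := by
    rcases eq_or_lt_of_le (norm_nonneg y) with h0 | h0
    · rw [← h0]; positivity
    · have := hKy
      rw [pow_two] at this
      nlinarith [Real.sqrt_nonneg S]
  have h2 : ‖y‖ ^ 2 ≤ γ ^ 2 * S := by
    calc ‖y‖ ^ 2 ≤ (γ * Real.sqrt S) ^ 2 := by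
          apply pow_le_pow_left₀ (norm_nonneg y) this
      _ = γ ^ 2 * S := by
          rw [mul_pow, Real.sq_sqrt hSnonneg]
  rw [div_mul_eq_mul_div, one_mul, div_le_iff₀ (by positivity)]
  linarith [h2]
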